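/- (Corollary 1, Poisson case.) Let Z ∈ ℝ^{n×q}, X ∈ ℝ^{n×p}, and suppose the n×(p+1) matrix [1_n | X] obtained by prepending a column of ones to X has full column rank. Let γ^c ∈ ℝ^q satisfy the constraint ‖(X − n⁻¹ 1_n 1_nᵀ X)ᵀ exp(Zγ^c)‖₂² = 0, and set ŷ^c = exp(Zγ^c) (exponential applied entrywise), with mean ȳ^c = n⁻¹ Σᵢ ŷᵢ^c > 0. Then the unique global minimizer (β̂₀, β̂) of the Poisson evaluation objective with intercept, (β₀, β) ↦ Σᵢ [exp(β₀ + xᵢᵀβ) − ŷᵢ^c (β₀ + xᵢᵀβ)], satisfies β̂ = 0 (and β̂₀ = log ȳ^c); i.e., the constrained optimization produces corrected coefficients with β̂^c = 0. -/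

import Mathlib

open Matrix

/-- Corollary 1 (Poisson case): if `γ^c` satisfies the centered constraint
`‖(X − n⁻¹ 1 1ᵀ X)ᵀ exp(Zγ^c)‖₂² = 0`, then for `ŷ^c = exp(Zγ^c)` with mean
`ȳ^c`, the Poisson evaluation model with intercept has its unique global
minimizer at `(β₀, β) = (log ȳ^c, 0)`. -/
theorem corollary1_poisson
    (n p q : ℕ)
    (Z : Matrix (Fin n) (Fin q) ℝ) (X : Matrix (Fin n) (Fin p) ℝ)
    (A : Matrix (Fin n) (Fin (p + 1)) ℝ)
    (hA_def : A = Matrix.of fun i j =>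
      Fin.cases (motive := fun _ => ℝ) 1 (fun j' => X i j') j)
    (hA : IsUnit (Aᵀ * A))
    (γc : Fin q → ℝ)
    (yc : Fin n → ℝ) (hyc : yc = fun i => Real.exp (Z.mulVec γc i))
    (Xc : Matrix (Fin n) (Fin p) ℝ)
    (hXc : Xc = X - (n : ℝ)⁻¹ • ((Matrix.of fun _ _ => (1 : ℝ)) * X))
    (hconstr : ∑ j, (Xcᵀ.mulVec yc j) ^ 2 = 0)
    (ybar : ℝ) (hybar : ybar = (n : ℝ)⁻¹ * ∑ i, yc i)
    (L : ℝ → (Fin p → ℝ) → ℝ)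
    (hL : L = fun β₀ β => ∑ i,
      (Real.exp (β₀ + X.mulVec β i) - yc i * (β₀ + X.mulVec β i))) :
    0 < ybar ∧
      ∀ β₀ : ℝ, ∀ β : Fin p → ℝ,
        (β₀, β) ≠ (Real.log ybar, (0 : Fin p → ℝ)) →
          L (Real.log ybar) 0 < L β₀ β := by
  -- n is positive
  have hn : n ≠ 0 := by
    intro h0
    subst h0
    have hzero : Aᵀ * A = 0 := by
      ext i j
      simp [Matrix.mul_apply]
    rw [hzero, isUnit_zero_iff] at hA
    have h01 := congrArg (fun M => M 0 0) hA
    simp [Matrix.one_apply] at h01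
  have hn' : 0 < n := Nat.pos_of_ne_zero hn
  have hnR : (0 : ℝ) < n := by exact_mod_cast hn'
  haveI : Nonempty (Fin n) := Fin.pos_iff_nonempty.mp hn'
  have hycpos : ∀ i, 0 < yc i := by
    intro i; simp only [hyc]; exact Real.exp_pos _
  have hsum : ∑ i, yc i = (n : ℝ) * ybar := by
    rw [hybar]; field_simp
  have hybar_pos : 0 < ybar := by
    rw [hybar]
    have hs : 0 < ∑ i, yc i :=
      Finset.sum_pos (fun i _ => hycpos i) Finset.univ_nonempty
    positivity
  refine ⟨hybar_pos, ?_⟩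
  set c := Real.log ybar with hc
  have hec : Real.exp c = ybar := Real.exp_log hybar_pos
  -- constraint: each component of Xcᵀ yc vanishes
  have hXcv : ∀ j, ∑ i, Xc i j * yc i = 0 := by
    intro j
    have h0 := (Finset.sum_eq_zero_iff_of_nonneg
      (fun j _ => sq_nonneg (Xcᵀ.mulVec yc j))).mp hconstr j (Finset.mem_univ j)
    have h1 : Xcᵀ.mulVec yc j = 0 := by
      exact pow_eq_zero_iff (n := 2) (by norm_num) |>.mp h0
    simpa [Matrix.mulVec, dotProduct, Matrix.transpose_apply] using h1
  have hXcapp : ∀ i j, Xc i j = X i j - (n : ℝ)⁻¹ * ∑ k, X k j := by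
    intro i j
    simp [hXc, Matrix.mul_apply, Matrix.sub_apply]
    exact Or.inl (Finset.sum_congr rfl fun k _ => one_mul (X k j) : ∑ k, (1 : ℝ) * X k j = ∑ k, X k j)
  have E2 : ∀ j, ∑ i, X i j * yc i = (∑ i, X i j) * ybar := by
    intro j
    have h1 := hXcv j
    have h2 : ∑ i, Xc i j * yc i
        = ∑ i, X i j * yc i - (∑ k, X k j) * ybar := by
      simp only [hXcapp, sub_mul]
      rw [Finset.sum_sub_distrib]
      congr 1
      rw [← Finset.mul_sum, hsum]
      field_simp
    rw [h2] at h1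
    linarith
  intro β₀ β hne
  -- the linear correction sums to zero
  have hzs : ∑ i, (yc i - ybar) * ((β₀ + X.mulVec β i) - c) = 0 := by
    have hmv : ∀ i, X.mulVec β i = ∑ j, X i j * β j := by
      intro i; simp [Matrix.mulVec, dotProduct]
    have step : ∀ i, (yc i - ybar) * ((β₀ + X.mulVec β i) - c)
        = (yc i - ybar) * (β₀ - c) + ∑ j, (yc i - ybar) * (X i j * β j) := by
      intro i
      rw [hmv, ← Finset.mul_sum]
      ring
    simp only [step]
    rw [Finset.sum_add_distrib]
    have h1 : ∑ i, (yc i - ybar) * (β₀ - c) = 0 := by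
      rw [← Finset.sum_mul, Finset.sum_sub_distrib, hsum]
      simp [Finset.card_univ, mul_comm]
    have h2 : ∑ i, ∑ j, (yc i - ybar) * (X i j * β j) = 0 := by
      rw [Finset.sum_comm]
      apply Finset.sum_eq_zero
      intro j _
      have e1 : ∑ i, (yc i - ybar) * (X i j * β j)
          = (∑ i, (yc i - ybar) * X i j) * β j := by
        rw [Finset.sum_mul]
        exact Finset.sum_congr rfl fun i _ => by ring
      have e2 : ∑ i, (yc i - ybar) * X i j
          = ∑ i, X i j * yc i - (∑ i, X i j) * ybar := by
        rw [Finset.sum_mul, ← Finset.sum_sub_distrib]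
        exact Finset.sum_congr rfl fun i _ => by ring
      rw [e1, e2, E2, sub_self, zero_mul]
    rw [h1, h2, add_zero]
  -- exists an index where the linear predictor differs from c
  have hex : ∃ i, β₀ + X.mulVec β i ≠ c := by
    by_contra hall
    push_neg at hall
    apply hne
    -- injectivity of A.mulVec from full rank
    obtain ⟨u, hu⟩ := hA
    have hBu : (↑u⁻¹ : Matrix (Fin (p+1)) (Fin (p+1)) ℝ) * (Aᵀ * A) = 1 := by
      rw [← hu]
      exact u.inv_mul
    have hinj : ∀ v w : Fin (p+1) → ℝ, A.mulVec v = A.mulVec w → v = w := by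
      intro v w hvw
      have h1 : (Aᵀ * A).mulVec v = (Aᵀ * A).mulVec w := by
        rw [← Matrix.mulVec_mulVec, ← Matrix.mulVec_mulVec, hvw]
      calc v = (1 : Matrix (Fin (p+1)) (Fin (p+1)) ℝ).mulVec v := (Matrix.one_mulVec v).symm
        _ = ((↑u⁻¹ : Matrix (Fin (p+1)) (Fin (p+1)) ℝ) * (Aᵀ * A)).mulVec v := by
            rw [hBu]
        _ = (↑u⁻¹ : Matrix (Fin (p+1)) (Fin (p+1)) ℝ).mulVec ((Aᵀ * A).mulVec v) := by
            rw [Matrix.mulVec_mulVec]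
        _ = (↑u⁻¹ : Matrix (Fin (p+1)) (Fin (p+1)) ℝ).mulVec ((Aᵀ * A).mulVec w) := by
            rw [h1]
        _ = ((↑u⁻¹ : Matrix (Fin (p+1)) (Fin (p+1)) ℝ) * (Aᵀ * A)).mulVec w := by
            rw [Matrix.mulVec_mulVec]
        _ = (1 : Matrix (Fin (p+1)) (Fin (p+1)) ℝ).mulVec w := by rw [hBu]
        _ = w := Matrix.one_mulVec w
    have hAv : A.mulVec (Fin.cons β₀ β) = fun i => β₀ + X.mulVec β i := by
      funext i
      rw [hA_def]
      simp [Matrix.mulVec, dotProduct, Fin.sum_univ_succ]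
    have hAw : A.mulVec (Fin.cons c (0 : Fin p → ℝ)) = fun _ => c := by
      funext i
      rw [hA_def]
      simp [Matrix.mulVec, dotProduct, Fin.sum_univ_succ]
    have heq : (Fin.cons β₀ β : Fin (p+1) → ℝ) = Fin.cons c (0 : Fin p → ℝ) := by
      apply hinj
      rw [hAv, hAw]
      funext i
      exact hall i
    have h0 : β₀ = c := by
      have := congrFun heq 0
      simpa using this
    have hb : β = 0 := by
      funext j
      have := congrFun heq j.succ
      simpa using this
    rw [h0, hb]
  obtain ⟨i₀, hi₀⟩ := hex
  -- main comparison
  rw [hL]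
  simp only [Matrix.mulVec_zero, Pi.zero_apply, add_zero]
  have hexp : ∀ i, Real.exp (β₀ + X.mulVec β i)
      = ybar * Real.exp ((β₀ + X.mulVec β i) - c) := by
    intro i
    rw [← hec, ← Real.exp_add]
    ring_nf
  have hpt : ∀ i, Real.exp c - yc i * c
      ≤ Real.exp (β₀ + X.mulVec β i) - yc i * (β₀ + X.mulVec β i)
        + (yc i - ybar) * ((β₀ + X.mulVec β i) - c) := by
    intro i
    have h1 := Real.add_one_le_exp ((β₀ + X.mulVec β i) - c)
    have h2 := hexp i
    nlinarith [hybar_pos]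
  have hptlt : Real.exp c - yc i₀ * c
      < Real.exp (β₀ + X.mulVec β i₀) - yc i₀ * (β₀ + X.mulVec β i₀)
        + (yc i₀ - ybar) * ((β₀ + X.mulVec β i₀) - c) := by
    have h1 := Real.add_one_lt_exp (sub_ne_zero.mpr hi₀)
    have h2 := hexp i₀
    nlinarith [hybar_pos]
  calc ∑ i, (Real.exp c - yc i * c)
      < ∑ i, (Real.exp (β₀ + X.mulVec β i) - yc i * (β₀ + X.mulVec β i)
          + (yc i - ybar) * ((β₀ + X.mulVec β i) - c)) := by
        exact Finset.sum_lt_sum (fun i _ => hpt i) ⟨i₀, Finset.mem_univ i₀, hptlt⟩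
    _ = ∑ i, (Real.exp (β₀ + X.mulVec β i) - yc i * (β₀ + X.mulVec β i)) := by
        rw [Finset.sum_add_distrib, hzs, add_zero]
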